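/- Let φ be the characteristic function of a real random variable Z that is not concentrated at one point and not lattice-valued (i.e., |φ(ζ)| < 1 for all ζ ≠ 0), with moment generating function M(θ) = E[e^{θZ}] finite for all real θ. Then for all 0 < δ₁ < δ₂ < ∞, 0 < K < ∞ and θ* > 0, there exists ρ ∈ (0,1) such that for all θ ∈ [0, θ*], all t with δ₁ ≤ |t| ≤ δ₂θ*, and all w with 1/K ≤ |w| ≤ K, one has |M(w(θ + it))| / M(wθ) ≤ 1 − ρ. -/

import Mathlib

open MeasureTheory Filter Set Complex Topology

section Aux

variable {Ω : Type*} [MeasurableSpace Ω] {μ : Measure Ω} [IsProbabilityMeasure μ] {Z : Ω → ℝ}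

lemma aux_re (a b z : ℝ) : (((a : ℂ) + (b : ℂ) * I) * (z : ℂ)).re = a * z := by
  simp [Complex.mul_re]

omit [IsProbabilityMeasure μ] in
lemma aux_integrable (hZmeas : Measurable Z)
    (hmgf : ∀ θ : ℝ, Integrable (fun ω => Real.exp (θ * Z ω)) μ) (a b : ℝ) :
    Integrable (fun ω => Complex.exp (((a : ℂ) + (b : ℂ) * I) * (Z ω : ℂ))) μ := by
  refine (hmgf a).mono' ?_ ?_
  · exact (Complex.measurable_exp.comp
      (measurable_const.mul (Complex.measurable_ofReal.comp hZmeas))).aestronglyMeasurable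
  · filter_upwards with ω
    rw [Complex.norm_exp, aux_re]

lemma aux_eq_one {z : ℂ} (h1 : ‖z‖ = 1) (h2 : z.re = 1) : z = 1 := by
  have h3 : Complex.normSq z = 1 := by rw [← Complex.sq_norm, h1]; norm_num
  rw [Complex.normSq_apply, h2] at h3
  have him : z.im = 0 := by nlinarith
  exact Complex.ext (by simp [h2]) (by simp [him])

lemma aux_lt (hZmeas : Measurable Z)
    (hmgf : ∀ θ : ℝ, Integrable (fun ω => Real.exp (θ * Z ω)) μ)
    (hnonlattice : ∀ ζ : ℝ, ζ ≠ 0 →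
      ‖∫ ω, Complex.exp (Complex.I * (ζ : ℂ) * (Z ω : ℂ)) ∂μ‖ < 1)
    (a b : ℝ) (hb : b ≠ 0) :
    ‖∫ ω, Complex.exp (((a : ℂ) + (b : ℂ) * I) * (Z ω : ℂ)) ∂μ‖
      < ∫ ω, Real.exp (a * Z ω) ∂μ := by
  set J := ∫ ω, Complex.exp (((a : ℂ) + (b : ℂ) * I) * (Z ω : ℂ)) ∂μ with hJdef
  have hMpos : 0 < ∫ ω, Real.exp (a * Z ω) ∂μ := integral_exp_pos (hmgf a)
  have hint := aux_integrable (μ := μ) hZmeas hmgf a b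
  have hle : ‖J‖ ≤ ∫ ω, Real.exp (a * Z ω) ∂μ := by
    calc ‖J‖ ≤ ∫ ω, ‖Complex.exp (((a : ℂ) + (b : ℂ) * I) * (Z ω : ℂ))‖ ∂μ := by
          exact norm_integral_le_integral_norm _
      _ = ∫ ω, Real.exp (a * Z ω) ∂μ := by
          congr 1; funext ω; rw [Complex.norm_exp, aux_re]
  rcases hle.lt_or_eq with h | heq
  · exact h
  exfalso
  have hr : (0 : ℝ) < ‖J‖ := by rw [heq]; exact hMpos
  have hJne : J ≠ 0 := by
    intro h0; rw [h0] at hr; simp at hr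
  set c : ℂ := (starRingEnd ℂ) J / (‖J‖ : ℂ) with hc
  have hcabs : ‖c‖ = 1 := by
    rw [hc, norm_div, Complex.norm_conj]
    simp [hr.ne']
  have hcJ : c * J = (‖J‖ : ℂ) := by
    rw [hc, div_mul_eq_mul_div, mul_comm, Complex.mul_conj, Complex.normSq_eq_norm_sq]
    rw [div_eq_iff (by exact_mod_cast hr.ne')]
    push_cast; ring
  have key : ∀ z : ℝ, Complex.exp (((a : ℂ) + (b : ℂ) * I) * (z : ℂ))
      = (Real.exp (a * z) : ℂ) * Complex.exp (((b * z : ℝ) : ℂ) * I) := by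
    intro z
    rw [Complex.ofReal_exp, ← Complex.exp_add]
    congr 1; push_cast; ring
  have hintc : Integrable (fun ω => c * Complex.exp (((a : ℂ) + (b : ℂ) * I) * (Z ω : ℂ))) μ :=
    hint.const_mul c
  have hre : ∫ ω, (c * Complex.exp (((a : ℂ) + (b : ℂ) * I) * (Z ω : ℂ))).re ∂μ
      = ‖J‖ := by
    have h2 := integral_re (μ := μ) (𝕜 := ℂ) hintc
    simp only [RCLike.re_eq_complex_re] at h2
    rw [h2, integral_const_mul, hcJ, Complex.ofReal_re]
  have hnonneg : ∀ ω, (c * Complex.exp (((a : ℂ) + (b : ℂ) * I) * (Z ω : ℂ))).re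
      ≤ Real.exp (a * Z ω) := by
    intro ω
    calc (c * Complex.exp (((a : ℂ) + (b : ℂ) * I) * (Z ω : ℂ))).re
        ≤ ‖c * Complex.exp (((a : ℂ) + (b : ℂ) * I) * (Z ω : ℂ))‖ :=
          Complex.re_le_norm _
      _ = Real.exp (a * Z ω) := by
          rw [norm_mul, hcabs, one_mul, Complex.norm_exp, aux_re]
  have hintre : Integrable
      (fun ω => (c * Complex.exp (((a : ℂ) + (b : ℂ) * I) * (Z ω : ℂ))).re) μ := by
    have := hintc.re
    simpa [RCLike.re_eq_complex_re] using this
  have hD0 : (fun ω => Real.exp (a * Z ω)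
        - (c * Complex.exp (((a : ℂ) + (b : ℂ) * I) * (Z ω : ℂ))).re) =ᵐ[μ] 0 := by
    rw [← integral_eq_zero_iff_of_nonneg_ae]
    · rw [integral_sub (hmgf a) hintre, hre, heq, sub_self]
    · filter_upwards with ω; simp only [Pi.zero_apply, sub_nonneg]; exact hnonneg ω
    · exact (hmgf a).sub hintre
  have hconst : ∀ᵐ ω ∂μ, Complex.exp (Complex.I * (b : ℂ) * (Z ω : ℂ)) = c⁻¹ := by
    filter_upwards [hD0] with ω hω
    simp only [Pi.zero_apply, sub_eq_zero] at hω
    set v := Complex.exp (((b * Z ω : ℝ) : ℂ) * I) with hv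
    have habsv : ‖v‖ = 1 := by rw [hv, Complex.norm_exp]; simp
    have hexp : (0 : ℝ) < Real.exp (a * Z ω) := Real.exp_pos _
    have h1 : (c * v).re = 1 := by
      have hrw : c * Complex.exp (((a : ℂ) + (b : ℂ) * I) * (Z ω : ℂ))
          = ((Real.exp (a * Z ω) : ℝ) : ℂ) * (c * v) := by rw [key]; ring
      rw [hrw, Complex.re_ofReal_mul] at hω
      have h2 : Real.exp (a * Z ω) * 1 = Real.exp (a * Z ω) * (c * v).re := by linarith
      exact (mul_left_cancel₀ hexp.ne' h2).symm
    have habscv : ‖c * v‖ = 1 := by rw [norm_mul, hcabs, habsv, one_mul]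
    have hcv : c * v = 1 := aux_eq_one habscv h1
    have hvc : v = c⁻¹ := (inv_eq_of_mul_eq_one_right hcv).symm
    rw [← hvc, hv]
    congr 1; push_cast; ring
  have habs1 : ‖∫ ω, Complex.exp (Complex.I * (b : ℂ) * (Z ω : ℂ)) ∂μ‖ = 1 := by
    rw [integral_congr_ae hconst]
    simp [hcabs, measure_univ]
  have hlt := hnonlattice b hb
  rw [habs1] at hlt
  exact lt_irrefl _ hlt

omit [IsProbabilityMeasure μ] in
lemma aux_contF (hZmeas : Measurable Z)
    (hmgf : ∀ θ : ℝ, Integrable (fun ω => Real.exp (θ * Z ω)) μ) :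
    Continuous (fun p : ℝ × ℝ =>
      ∫ ω, Complex.exp (((p.1 : ℂ) + (p.2 : ℂ) * I) * (Z ω : ℂ)) ∂μ) := by
  rw [continuous_iff_continuousAt]
  intro p₀
  apply continuousAt_of_dominated
    (bound := fun ω => Real.exp ((p₀.1 + 1) * Z ω) + Real.exp ((p₀.1 - 1) * Z ω))
  · filter_upwards with x
    exact (aux_integrable (μ := μ) hZmeas hmgf x.1 x.2).aestronglyMeasurable
  · have hev : ∀ᶠ x : ℝ × ℝ in 𝓝 p₀, x.1 ∈ Ioo (p₀.1 - 1) (p₀.1 + 1) :=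
      (continuous_fst.continuousAt (x := p₀)).eventually_mem
        (Ioo_mem_nhds (by linarith) (by linarith))
    filter_upwards [hev] with x hx
    filter_upwards with ω
    rw [Complex.norm_exp, aux_re]
    rcases le_or_gt 0 (Z ω) with h | h
    · have h1 : x.1 * Z ω ≤ (p₀.1 + 1) * Z ω := mul_le_mul_of_nonneg_right hx.2.le h
      have h2 := Real.exp_le_exp.mpr h1
      nlinarith [Real.exp_pos ((p₀.1 - 1) * Z ω)]
    · have h1 : x.1 * Z ω ≤ (p₀.1 - 1) * Z ω := by nlinarith [hx.1]
      have h2 := Real.exp_le_exp.mpr h1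
      nlinarith [Real.exp_pos ((p₀.1 + 1) * Z ω)]
  · exact (hmgf _).add (hmgf _)
  · filter_upwards with ω
    apply Continuous.continuousAt
    exact Complex.continuous_exp.comp
      (((Complex.continuous_ofReal.comp continuous_fst).add
        ((Complex.continuous_ofReal.comp continuous_snd).mul continuous_const)).mul
        continuous_const)

end Aux

/-- uniform bound away from 1 for the ratio of the (complex) moment generating
function for non-lattice, non-degenerate `Z`. -/
theorem mgf_ratio_bounded_away_from_one
    {Ω : Type*} [MeasurableSpace Ω] (μ : Measure Ω) [IsProbabilityMeasure μ]
    (Z : Ω → ℝ) (hZmeas : Measurable Z)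
    (hnondeg : ¬∃ z : ℝ, ∀ᵐ ω ∂μ, Z ω = z)
    (hmgf : ∀ θ : ℝ, Integrable (fun ω => Real.exp (θ * Z ω)) μ)
    (hnonlattice : ∀ ζ : ℝ, ζ ≠ 0 →
      ‖∫ ω, Complex.exp (Complex.I * (ζ : ℂ) * (Z ω : ℂ)) ∂μ‖ < 1)
    (δ₁ δ₂ K θstar : ℝ) (hδ₁ : 0 < δ₁) (hδ : δ₁ < δ₂) (hK : 0 < K) (hθstar : 0 < θstar) :
    ∃ ρ ∈ Ioo (0 : ℝ) 1, ∀ θ ∈ Icc (0 : ℝ) θstar, ∀ t : ℝ,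
      δ₁ ≤ |t| → |t| ≤ δ₂ * θstar → ∀ w : ℝ, 1 / K ≤ |w| → |w| ≤ K →
        ‖∫ ω, Complex.exp ((w : ℂ) * ((θ : ℂ) + (t : ℂ) * Complex.I) * (Z ω : ℂ)) ∂μ‖
          / (∫ ω, Real.exp (w * θ * Z ω) ∂μ) ≤ 1 - ρ := by
  set F : ℝ × ℝ → ℂ :=
    (fun p : ℝ × ℝ => ∫ ω, Complex.exp (((p.1 : ℂ) + (p.2 : ℂ) * I) * (Z ω : ℂ)) ∂μ)
    with hFdef
  set N : ℝ → ℝ := (fun a : ℝ => ∫ ω, Real.exp (a * Z ω) ∂μ) with hNdef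
  have hFc : Continuous F := aux_contF hZmeas hmgf
  have hNpos : ∀ a : ℝ, 0 < N a := fun a => integral_exp_pos (hmgf a)
  have hMeq : ∀ a : ℝ, F (a, 0) = ((N a : ℝ) : ℂ) := by
    intro a
    rw [hFdef, hNdef]
    calc (∫ ω, Complex.exp (((a : ℂ) + ((0 : ℝ) : ℂ) * I) * (Z ω : ℂ)) ∂μ)
        = ∫ ω, ((Real.exp (a * Z ω) : ℝ) : ℂ) ∂μ :=
          integral_congr_ae (Eventually.of_forall fun ω => by
            show Complex.exp (((a : ℂ) + ((0 : ℝ) : ℂ) * I) * (Z ω : ℂ))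
              = ((Real.exp (a * Z ω) : ℝ) : ℂ)
            rw [Complex.ofReal_exp]; congr 1; push_cast; ring)
      _ = ((∫ ω, Real.exp (a * Z ω) ∂μ : ℝ) : ℂ) := integral_ofReal
  have hNc : Continuous N := by
    have h2 : Continuous (fun a : ℝ => (F (a, 0)).re) :=
      Complex.continuous_re.comp (hFc.comp (continuous_id.prodMk continuous_const))
    exact h2.congr fun a => by rw [hMeq a, Complex.ofReal_re]
  set g : ℝ × ℝ × ℝ → ℝ := fun p =>
    ‖F (p.2.2 * p.1, p.2.2 * p.2.1)‖ / N (p.2.2 * p.1) with hgdef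
  have hgc : Continuous g := by
    apply Continuous.div
    · exact continuous_norm.comp (hFc.comp (by fun_prop))
    · exact hNc.comp (by fun_prop)
    · intro p; exact (hNpos _).ne'
  have hgnonneg : ∀ p, 0 ≤ g p := fun p => div_nonneg (norm_nonneg _) (hNpos _).le
  set S : Set (ℝ × ℝ × ℝ) := Icc 0 θstar ×ˢ
    ({t : ℝ | δ₁ ≤ |t| ∧ |t| ≤ δ₂ * θstar} ×ˢ {w : ℝ | 1 / K ≤ |w| ∧ |w| ≤ K}) with hSdef
  have hTcompact : ∀ u v : ℝ, IsCompact {t : ℝ | u ≤ |t| ∧ |t| ≤ v} := by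
    intro u v
    apply (isCompact_Icc (a := -v) (b := v)).of_isClosed_subset
    · rw [Set.setOf_and]
      exact (isClosed_le continuous_const _root_.continuous_abs).inter
        (isClosed_le _root_.continuous_abs continuous_const)
    · intro t ht; exact abs_le.mp ht.2
  have hScompact : IsCompact S :=
    isCompact_Icc.prod ((hTcompact _ _).prod (hTcompact _ _))
  have hglt : ∀ p ∈ S, g p < 1 := by
    rintro ⟨θ, t, w⟩ ⟨hθ, ht, hw⟩
    replace ht : δ₁ ≤ |t| ∧ |t| ≤ δ₂ * θstar := ht
    replace hw : 1 / K ≤ |w| ∧ |w| ≤ K := hw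
    have hw0 : w ≠ 0 := by
      intro h
      rw [h, _root_.abs_zero] at hw
      have := one_div_pos.mpr hK
      linarith [hw.1]
    have ht0 : t ≠ 0 := by
      intro h; rw [h, _root_.abs_zero] at ht; linarith [ht.1]
    have hlt := aux_lt hZmeas hmgf hnonlattice (w * θ) (w * t) (mul_ne_zero hw0 ht0)
    have : g (θ, t, w) = ‖F (w * θ, w * t)‖ / N (w * θ) := by rw [hgdef]
    rw [this]
    exact (div_lt_one (hNpos _)).mpr hlt
  have hgoal_eq : ∀ θ t w : ℝ,
      ‖∫ ω, Complex.exp ((w : ℂ) * ((θ : ℂ) + (t : ℂ) * Complex.I) * (Z ω : ℂ)) ∂μ‖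
        / (∫ ω, Real.exp (w * θ * Z ω) ∂μ) = g (θ, t, w) := by
    intro θ t w
    have h1 : (∫ ω, Complex.exp ((w : ℂ) * ((θ : ℂ) + (t : ℂ) * Complex.I) * (Z ω : ℂ)) ∂μ)
        = F (w * θ, w * t) := by
      rw [hFdef]
      exact integral_congr_ae (Eventually.of_forall fun ω => by
        show Complex.exp ((w : ℂ) * ((θ : ℂ) + (t : ℂ) * Complex.I) * (Z ω : ℂ))
          = Complex.exp ((((w * θ : ℝ) : ℂ) + ((w * t : ℝ) : ℂ) * I) * (Z ω : ℂ))
        congr 1; push_cast; ring)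
    have h2 : (∫ ω, Real.exp (w * θ * Z ω) ∂μ) = N (w * θ) := by rw [hNdef]
    rw [h1, h2]
  by_cases hS : S.Nonempty
  · obtain ⟨x₀, hx₀S, hx₀max⟩ := hScompact.exists_isMaxOn hS hgc.continuousOn
    set m := g x₀ with hm
    have hm1 : m < 1 := hglt _ hx₀S
    have hm0 : 0 ≤ m := hgnonneg _
    refine ⟨min (1 - m) (1 / 2),
      ⟨lt_min (by linarith) (by norm_num),
        lt_of_le_of_lt (min_le_right _ _) (by norm_num)⟩, ?_⟩
    intro θ hθ t ht1 ht2 w hw1 hw2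
    have hmem : (θ, t, w) ∈ S := ⟨hθ, ⟨ht1, ht2⟩, ⟨hw1, hw2⟩⟩
    have hle : g (θ, t, w) ≤ m := hx₀max hmem
    rw [hgoal_eq θ t w]
    have := min_le_left (1 - m) (1 / 2)
    linarith
  · refine ⟨1 / 2, by norm_num, ?_⟩
    intro θ hθ t ht1 ht2 w hw1 hw2
    exact absurd ⟨(θ, t, w), hθ, ⟨ht1, ht2⟩, ⟨hw1, hw2⟩⟩ hS
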